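/- arXiv:1905.10516 — 7 statements merged into one kernel-verified Lean document; each statement's English description precedes it below -/
import Mathlib

section
/- Let B be a smooth convex body in ℝ^d and let u_1,…,u_M be unit vectors. Then the set of boundary points of B illuminated by at least one of the directions u_1,…,u_M equals the set of boundary points of B illuminated by at least one nonzero vector from the nonnegative cone {a_1 u_1 + … + a_M u_M : a_1,…,a_M ≥ 0}. -/
open Set MeasureTheory Pointwise RealInnerProductSpace

/-- A convex body: a compact convex set with nonempty interior. -/
def IsConvexBody {E : Type*} [NormedAddCommGroup E] [NormedSpace ℝ E] (B : Set E) : Prop :=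
  Convex ℝ B ∧ IsCompact B ∧ (interior B).Nonempty

/-- A boundary point `x` of `B` is illuminated by direction `v` if moving from `x`
in direction `v` enters the interior of `B`. -/
def Illuminates {E : Type*} [NormedAddCommGroup E] [NormedSpace ℝ E]
    (B : Set E) (v x : E) : Prop :=
  ∃ t : ℝ, 0 < t ∧ x + t • v ∈ interior B

/-- A convex body is smooth if through every boundary point there is a unique supporting
hyperplane, i.e. a unique unit interior normal vector. -/
def IsSmoothBody {E : Type*} [NormedAddCommGroup E] [InnerProductSpace ℝ E]
    (B : Set E) : Prop :=
  ∀ x ∈ frontier B, ∃! n : E, ‖n‖ = 1 ∧ ∀ y ∈ B, ⟪n, x⟫ ≤ ⟪n, y⟫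

/-- Interior points are strictly on the positive side of a supporting hyperplane. -/
lemma inner_lt_of_mem_interior {E : Type*} [NormedAddCommGroup E] [InnerProductSpace ℝ E]
    {B : Set E} {n x y : E} (hn : ‖n‖ = 1) (hsupp : ∀ z ∈ B, ⟪n, x⟫ ≤ ⟪n, z⟫)
    (hB : interior B ⊆ B) (hy : y ∈ interior B) : ⟪n, x⟫ < ⟪n, y⟫ := by
  obtain ⟨ε, hε, hball⟩ := Metric.isOpen_iff.1 isOpen_interior y hy
  have hmem : y - (ε / 2) • n ∈ B := by
    apply hB; apply hball
    have : dist (y - (ε / 2) • n) y = ε / 2 := by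
      simp [dist_eq_norm, norm_smul, abs_of_pos, hn, half_pos hε, le_of_lt (half_pos hε),
        abs_of_nonneg, abs_of_pos hε]
    rw [Metric.mem_ball, this]; linarith
  have := hsupp _ hmem
  rw [inner_sub_right, real_inner_smul_right, real_inner_self_eq_norm_sq, hn] at this
  nlinarith

/-- If a boundary point `x` is illuminated by `v`, then `⟪n, v⟫ > 0` for any supporting
normal `n` at `x`. -/
lemma inner_pos_of_illuminates {E : Type*} [NormedAddCommGroup E] [InnerProductSpace ℝ E]
    {B : Set E} {n x v : E} (hn : ‖n‖ = 1) (hsupp : ∀ z ∈ B, ⟪n, x⟫ ≤ ⟪n, z⟫)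
    (hB : interior B ⊆ B) (hill : Illuminates B v x) : 0 < ⟪n, v⟫ := by
  obtain ⟨t, ht, hmem⟩ := hill
  have := inner_lt_of_mem_interior hn hsupp hB hmem
  rw [inner_add_right, real_inner_smul_right] at this
  nlinarith

/-- Converse, using smoothness: if `⟪n, v⟫ > 0` for the unit supporting normal `n` at a
boundary point `x` of a smooth convex body, then `v` illuminates `x`. -/
lemma illuminates_of_inner_pos {d : ℕ} {B : Set (EuclideanSpace ℝ (Fin d))}
    (hB : IsConvexBody B) (hsm : IsSmoothBody B) {x : EuclideanSpace ℝ (Fin d)}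
    (hx : x ∈ frontier B) {n : EuclideanSpace ℝ (Fin d)}
    (hn : ‖n‖ = 1 ∧ ∀ y ∈ B, ⟪n, x⟫ ≤ ⟪n, y⟫)
    {v : EuclideanSpace ℝ (Fin d)} (hv : 0 < ⟪n, v⟫) : Illuminates B v x := by
  obtain ⟨hconv, hcomp, hint⟩ := hB
  by_contra hnot
  -- the ray from x in direction v misses the interior
  set T : Set (EuclideanSpace ℝ (Fin d)) := {y | ∃ t : ℝ, 0 ≤ t ∧ y = x + t • v} with hT
  have hTconv : Convex ℝ T := by
    rintro p ⟨t₁, ht₁, rfl⟩ q ⟨t₂, ht₂, rfl⟩ a b ha hb hab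
    refine ⟨a * t₁ + b * t₂, by positivity, ?_⟩
    have : a • (x + t₁ • v) + b • (x + t₂ • v) = (a + b) • x + (a * t₁ + b * t₂) • v := by
      module
    rw [this, hab, one_smul]
  have hdisj : Disjoint (interior B) T := by
    rw [Set.disjoint_left]
    rintro y hy ⟨t, ht, rfl⟩
    rcases eq_or_lt_of_le ht with h | h
    · apply hx.2
      simpa [← h] using hy
    · exact hnot ⟨t, h, hy⟩
  obtain ⟨f, c, hfc, hcf⟩ :=
    geometric_hahn_banach_open (hconv.interior) isOpen_interior hTconv hdisj
  -- f ≤ c on B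
  have hfB : ∀ y ∈ B, f y ≤ c := by
    intro y hy
    obtain ⟨z, hz⟩ := hint
    have hycl : y ∈ closure (interior B) := by
      have htend : Filter.Tendsto (fun t : ℝ => y + t • (z - y)) (nhdsWithin 0 (Set.Ioi 0))
          (nhds y) := by
        have hc : Continuous (fun t : ℝ => y + t • (z - y)) := by continuity
        have := (hc.tendsto 0).mono_left (nhdsWithin_le_nhds (s := Set.Ioi (0:ℝ)))
        simpa using this
      refine mem_closure_of_tendsto htend ?_
      filter_upwards [Ioc_mem_nhdsGT_of_mem (Set.left_mem_Ico.2 one_pos)] with t ht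
      exact hconv.add_smul_sub_mem_interior hy hz ht
    have : closure (interior B) ⊆ {a | f a ≤ c} :=
      (isClosed_le f.continuous continuous_const).closure_subset_iff.2
        fun a ha => (hfc a ha).le
    exact this hycl
  -- f x = c
  have hxB : x ∈ B := by
    have := frontier_subset_closure (s := B) hx
    rwa [hcomp.isClosed.closure_eq] at this
  have hfx : f x = c :=
    le_antisymm (hfB x hxB) (hcf x ⟨0, le_refl 0, by simp⟩)
  -- translate f into a vector w
  set w : EuclideanSpace ℝ (Fin d) :=
    (InnerProductSpace.toDual ℝ (EuclideanSpace ℝ (Fin d))).symm f with hw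
  have hwf : ∀ y, ⟪w, y⟫ = f y := fun y => InnerProductSpace.toDual_symm_apply
  have hw0 : w ≠ 0 := by
    obtain ⟨z, hz⟩ := hint
    intro h
    have h1 : f z < c := hfc z hz
    have h2 : f z = 0 := by rw [← hwf, h, inner_zero_left]
    have h3 : f x = 0 := by rw [← hwf, h, inner_zero_left]
    rw [h2] at h1; rw [h3] at hfx; linarith
  -- the unit inner normal coming from f
  set m : EuclideanSpace ℝ (Fin d) := -(‖w‖⁻¹ • w) with hm
  have hmnorm : ‖m‖ = 1 := by
    rw [hm, norm_neg, norm_smul, norm_inv, norm_norm,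
      inv_mul_cancel₀ (norm_ne_zero_iff.2 hw0)]
  have hmsupp : ∀ y ∈ B, ⟪m, x⟫ ≤ ⟪m, y⟫ := by
    intro y hy
    rw [hm]
    simp only [inner_neg_left, real_inner_smul_left, hwf, hfx]
    have : f y ≤ c := hfB y hy
    have hwpos : 0 < ‖w‖⁻¹ := inv_pos.2 (norm_pos_iff.2 hw0)
    nlinarith
  -- by uniqueness the normal is m, but ⟪m, v⟫ ≤ 0
  obtain ⟨n', hn', huniq⟩ := hsm x hx
  have hmn : m = n := by
    rw [huniq m ⟨hmnorm, hmsupp⟩, ← huniq n hn]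
  have hmv : ⟪m, v⟫ ≤ 0 := by
    have h1 : c ≤ f (x + v) := hcf _ ⟨1, zero_le_one, by simp⟩
    have h2 : f (x + v) = f x + f v := map_add f x v
    have h3 : 0 ≤ f v := by rw [h2, hfx] at h1; linarith
    rw [hm]
    simp only [inner_neg_left, real_inner_smul_left, hwf]
    have hwpos : 0 < ‖w‖⁻¹ := inv_pos.2 (norm_pos_iff.2 hw0)
    nlinarith
  rw [hmn] at hmv
  linarith

/-- For a smooth convex body `B` and unit vectors `u₁, …, u_M`, the set of boundary points
illuminated by one of the `uᵢ` equals the set of boundary points illuminated by some nonzero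
vector of the nonnegative cone `{a₁ u₁ + ⋯ + a_M u_M : aᵢ ≥ 0}`. -/
theorem illuminated_cone_eq (d : ℕ) (B : Set (EuclideanSpace ℝ (Fin d)))
    (hB : IsConvexBody B) (hsm : IsSmoothBody B)
    (M : ℕ) (u : Fin M → EuclideanSpace ℝ (Fin d)) (hu : ∀ i, ‖u i‖ = 1) :
    {x ∈ frontier B | ∃ i, Illuminates B (u i) x} =
      {x ∈ frontier B | ∃ v : EuclideanSpace ℝ (Fin d), v ≠ 0 ∧
        (∃ a : Fin M → ℝ, (∀ i, 0 ≤ a i) ∧ v = ∑ i, a i • u i) ∧ Illuminates B v x} := by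
  ext x
  simp only [Set.mem_setOf_eq]
  constructor
  · rintro ⟨hx, i, hi⟩
    refine ⟨hx, u i, ?_, ⟨fun j => if j = i then 1 else 0, fun j => by positivity, ?_⟩, hi⟩
    · intro h; have := hu i; rw [h, norm_zero] at this; norm_num at this
    · simp only [ite_smul, one_smul, zero_smul]
      rw [Finset.sum_ite_eq' Finset.univ i u]
      simp
  · rintro ⟨hx, v, hv0, ⟨a, ha, rfl⟩, hill⟩
    refine ⟨hx, ?_⟩
    obtain ⟨n, hn, _⟩ := hsm x hx
    have hpos : 0 < ⟪n, ∑ i, a i • u i⟫ :=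
      inner_pos_of_illuminates hn.1 hn.2 interior_subset hill
    rw [inner_sum] at hpos
    have : ∃ i, 0 < ⟪n, a i • u i⟫ := by
      by_contra h
      push_neg at h
      have := Finset.sum_nonpos (fun i (_ : i ∈ Finset.univ) => h i)
      linarith
    obtain ⟨i, hi⟩ := this
    rw [real_inner_smul_right] at hi
    have hai : 0 < ⟪n, u i⟫ := by
      rcases lt_or_eq_of_le (ha i) with h | h
      · nlinarith
      · rw [← h] at hi; simp at hi
    exact ⟨i, illuminates_of_inner_pos hB hsm hx hn hai⟩
end

section
/- Let B be a convex body in ℝ^d with 0 ∈ int B, let v ∈ ℝ^d, and let δ_1, δ_2, Δ_1 ∈ (0,1) with Δ_1 < δ_1. Set Δ_2 = Δ_1 δ_2 / δ_1. Then the intersection of the open homothet −δ_1 v + (1 − δ_2) • int B with B is contained in −Δ_1 v + (1 − Δ_2) • int B. -/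
open Set MeasureTheory Pointwise

/-- For a convex body `B` with `0 ∈ int B`, `δ₁, δ₂, Δ₁ ∈ (0,1)` with `Δ₁ < δ₁` and
`Δ₂ = Δ₁ δ₂ / δ₁`, the intersection of `-δ₁ v + (1 - δ₂) • int B` with `B` is contained
in `-Δ₁ v + (1 - Δ₂) • int B`. -/
theorem homothet_inter_subset (d : ℕ) (B : Set (EuclideanSpace ℝ (Fin d)))
    (hB : IsConvexBody B) (h0 : 0 ∈ interior B)
    (v : EuclideanSpace ℝ (Fin d))
    (δ1 δ2 Δ1 : ℝ) (hδ1 : δ1 ∈ Set.Ioo (0 : ℝ) 1) (hδ2 : δ2 ∈ Set.Ioo (0 : ℝ) 1)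
    (hΔ1 : Δ1 ∈ Set.Ioo (0 : ℝ) 1) (hlt : Δ1 < δ1) :
    (((-δ1) • v +ᵥ (1 - δ2) • interior B) ∩ B) ⊆
      (-Δ1) • v +ᵥ (1 - Δ1 * δ2 / δ1) • interior B := by
  obtain ⟨hconv, -, -⟩ := hB
  obtain ⟨hδ1pos, hδ1lt⟩ := hδ1
  obtain ⟨hδ2pos, hδ2lt⟩ := hδ2
  obtain ⟨hΔ1pos, hΔ1lt⟩ := hΔ1
  rintro x ⟨hx1, hxB⟩
  rw [mem_vadd_set] at hx1 ⊢
  obtain ⟨y, hy, rfl⟩ := hx1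
  obtain ⟨b, hb, rfl⟩ := hy
  set t : ℝ := Δ1 / δ1 with ht
  have hδ1ne : δ1 ≠ 0 := ne_of_gt hδ1pos
  have ht0 : 0 < t := div_pos hΔ1pos hδ1pos
  have ht1 : t < 1 := (div_lt_one hδ1pos).2 hlt
  have hΔ2lt : t * δ2 < 1 := by nlinarith
  have hne : (1 : ℝ) - t * δ2 ≠ 0 := by intro h; linarith
  have heq : Δ1 * δ2 / δ1 = t * δ2 := by rw [ht]; ring
  rw [heq]
  refine ⟨(1 - t * δ2) • ((t * (1 - δ2) / (1 - t * δ2)) • b +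
      ((1 - t) / (1 - t * δ2)) • ((-δ1) • v + (1 - δ2) • b)), smul_mem_smul_set ?_, ?_⟩
  · exact hconv.combo_interior_self_mem_interior hb hxB
      (div_pos (mul_pos ht0 (by linarith)) (by linarith))
      (div_nonneg (by linarith) (by linarith))
      (by rw [← add_div, div_eq_one_iff_eq hne]; ring)
  · have htΔ : t * δ1 = Δ1 := by rw [ht]; field_simp
    simp only [vadd_eq_add]
    match_scalars
    · field_simp
      nlinarith [htΔ, sq_nonneg δ1]
    · field_simp
      ring
end

section
/- Let P be a convex body in ℝ^d, let Q be a convex body in ℝ^m, and let α be a real number with 0 ≤ α ≤ d. Then g_{α+m}(P × Q) ≥ g_α(P), where P × Q is the (d+m)-dimensional convex body given by the Cartesian product. -/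
open Set MeasureTheory Pointwise

/-- `gCov α B` is the infimum of `∑ λᵢ^α` over all finite translative coverings of `B`
by homothets `xᵢ + λᵢ • B` with `λᵢ ∈ (0,1)`. -/
noncomputable def gCov {E : Type*} [NormedAddCommGroup E] [NormedSpace ℝ E]
    (α : ℝ) (B : Set E) : ℝ :=
  sInf {s : ℝ | ∃ (k : ℕ) (lam : Fin k → ℝ) (x : Fin k → E),
    (∀ i, lam i ∈ Set.Ioo (0 : ℝ) 1) ∧
    B ⊆ (⋃ i, x i +ᵥ lam i • B) ∧
    s = ∑ i, lam i ^ α}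

/-- Any compact set with nonempty interior admits a finite covering by smaller homothets. -/
lemma coverSet_nonempty {E : Type*} [NormedAddCommGroup E] [NormedSpace ℝ E]
    (α : ℝ) (B : Set E) (hB : IsCompact B) (hB' : (interior B).Nonempty) :
    {s : ℝ | ∃ (k : ℕ) (lam : Fin k → ℝ) (x : Fin k → E),
      (∀ i, lam i ∈ Set.Ioo (0 : ℝ) 1) ∧
      B ⊆ (⋃ i, x i +ᵥ lam i • B) ∧
      s = ∑ i, lam i ^ α}.Nonempty := by
  obtain ⟨c, hc⟩ := hB'
  set U : E → Set E := fun x => (x - (2⁻¹ : ℝ) • c) +ᵥ (2⁻¹ : ℝ) • interior B with hU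
  have hUopen : ∀ x, IsOpen (U x) := fun x =>
    (isOpen_interior.smul₀ (by norm_num : (2⁻¹ : ℝ) ≠ 0)).vadd _
  have hmemU : ∀ x ∈ B, x ∈ U x := by
    intro x _
    refine ⟨(2⁻¹ : ℝ) • c, smul_mem_smul_set hc, ?_⟩
    simp [vadd_eq_add]
  obtain ⟨t, ht⟩ := hB.elim_finite_subcover U hUopen (fun x hx => mem_iUnion.2 ⟨x, hmemU x hx⟩)
  refine ⟨∑ _j : Fin t.card, (2⁻¹ : ℝ) ^ α, t.card,
    fun _ => (2⁻¹ : ℝ), fun j => (t.equivFin.symm j : E) - (2⁻¹ : ℝ) • c,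
    fun _ => ⟨by norm_num, by norm_num⟩, ?_, rfl⟩
  intro x hx
  obtain ⟨i, hit, hxi⟩ := by simpa using ht hx
  refine mem_iUnion.2 ⟨t.equivFin ⟨i, hit⟩, ?_⟩
  have : U i ⊆ (i - (2⁻¹ : ℝ) • c) +ᵥ (2⁻¹ : ℝ) • B := by
    rw [hU]
    exact vadd_set_mono (smul_set_mono interior_subset)
  have := this hxi
  simpa using this

/-- For convex bodies `P ⊆ ℝ^d` and `Q ⊆ ℝ^m` and `0 ≤ α ≤ d`, one has
`g_{α+m}(P × Q) ≥ g_α(P)`. -/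
theorem gCov_prod_ge (d m : ℕ) (α : ℝ) (hα : 0 ≤ α) (hαd : α ≤ d)
    (P : Set (EuclideanSpace ℝ (Fin d))) (hP : IsConvexBody P)
    (Q : Set (EuclideanSpace ℝ (Fin m))) (hQ : IsConvexBody Q) :
    gCov α P ≤ gCov (α + m) (P ×ˢ Q) := by
  classical
  have hPQcompact : IsCompact (P ×ˢ Q) := hP.2.1.prod hQ.2.1
  have hPQint : (interior (P ×ˢ Q)).Nonempty := by
    rw [interior_prod_eq]; exact hP.2.2.prod hQ.2.2
  refine le_csInf (coverSet_nonempty _ _ hPQcompact hPQint) ?_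
  rintro s ⟨k, lam, x, hlam, hcov, rfl⟩
  set a : Fin k → EuclideanSpace ℝ (Fin d) := fun i => (x i).1 with ha
  set b : Fin k → EuclideanSpace ℝ (Fin m) := fun i => (x i).2 with hb
  set S : Fin k → Set (EuclideanSpace ℝ (Fin m)) := fun i => b i +ᵥ lam i • Q with hS
  -- slicing: each point of a slice P × {y} lies in the slice of some homothet
  have hslice : ∀ p ∈ P, ∀ y ∈ Q, ∃ i, p ∈ a i +ᵥ lam i • P ∧ y ∈ S i := by
    intro p hp y hy
    have hmem : (p, y) ∈ ⋃ i, x i +ᵥ lam i • (P ×ˢ Q) := hcov ⟨hp, hy⟩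
    obtain ⟨i, hi⟩ := mem_iUnion.1 hmem
    obtain ⟨z, hz, hxz⟩ := hi
    obtain ⟨w, hw, rfl⟩ := hz
    refine ⟨i, ⟨lam i • w.1, smul_mem_smul_set hw.1, ?_⟩,
      ⟨lam i • w.2, smul_mem_smul_set hw.2, ?_⟩⟩
    · have := congrArg Prod.fst hxz
      simpa [vadd_eq_add, ha] using this
    · have := congrArg Prod.snd hxz
      simpa [vadd_eq_add, hb] using this
  -- key pointwise bound: for each y ∈ Q, the indices whose slice contains y yield a covering
  have hgP : ∀ y ∈ Q, gCov α P ≤ ∑ i ∈ Finset.univ.filter (fun i => y ∈ S i), lam i ^ α := by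
    intro y hy
    set T := Finset.univ.filter (fun i => y ∈ S i) with hT
    refine csInf_le ⟨0, ?_⟩ ?_
    · rintro r ⟨k', l', x', hl', -, rfl⟩
      exact Finset.sum_nonneg fun i _ => Real.rpow_nonneg (hl' i).1.le α
    · refine ⟨T.card, fun j => lam (T.equivFin.symm j), fun j => a (T.equivFin.symm j),
        fun j => hlam _, ?_, ?_⟩
      · intro p hp
        obtain ⟨i, hiP, hiS⟩ := hslice p hp y hy
        have hiT : i ∈ T := by simp [hT, hiS]
        refine mem_iUnion.2 ⟨T.equivFin ⟨i, hiT⟩, ?_⟩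
        simpa using hiP
      · rw [← Finset.sum_coe_sort T (fun i => lam i ^ α)]
        exact Fintype.sum_equiv T.equivFin _ _ (fun i => by simp)
  -- measure-theoretic averaging over Q
  set μ : Measure (EuclideanSpace ℝ (Fin m)) := volume with hμ
  have hScompact : ∀ i, IsCompact (S i) := by
    intro i
    have h1 : IsCompact (lam i • Q) := by
      rw [← Set.image_smul]
      exact hQ.2.1.image (continuous_const_smul _)
    rw [hS]
    simp only [← Set.image_vadd]
    exact h1.image (continuous_const_vadd _)
  have hSmeas : ∀ i, MeasurableSet (S i) := fun i => (hScompact i).isClosed.measurableSet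
  have hμS : ∀ i, μ (S i) = ENNReal.ofReal (lam i ^ (m : ℝ)) * μ Q := by
    intro i
    rw [hS]
    simp only
    rw [measure_vadd, Measure.addHaar_smul, finrank_euclideanSpace_fin]
    congr 2
    rw [abs_of_nonneg (pow_nonneg (hlam i).1.le m), Real.rpow_natCast]
  have hsum_nonneg : (0 : ℝ) ≤ ∑ i, lam i ^ (α + m) :=
    Finset.sum_nonneg fun i _ => Real.rpow_nonneg (hlam i).1.le _
  have key : ENNReal.ofReal (gCov α P) * μ Q ≤ ENNReal.ofReal (∑ i, lam i ^ (α + m)) * μ Q := by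
    have hmono : ∀ y ∈ Q, ENNReal.ofReal (gCov α P) ≤
        ∑ i, (S i).indicator (fun _ => ENNReal.ofReal (lam i ^ α)) y := by
      intro y hy
      refine (ENNReal.ofReal_le_ofReal (hgP y hy)).trans ?_
      rw [ENNReal.ofReal_sum_of_nonneg (fun i _ => Real.rpow_nonneg (hlam i).1.le α),
        Finset.sum_filter]
      refine le_of_eq (Finset.sum_congr rfl fun i _ => ?_)
      simp [Set.indicator_apply]
    calc ENNReal.ofReal (gCov α P) * μ Q
        = ∫⁻ _ in Q, ENNReal.ofReal (gCov α P) ∂μ := (setLIntegral_const _ _).symm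
      _ ≤ ∫⁻ y in Q, ∑ i, (S i).indicator (fun _ => ENNReal.ofReal (lam i ^ α)) y ∂μ := by
          refine setLIntegral_mono (by fun_prop (disch := exact hSmeas _)) hmono
      _ = ∑ i, ∫⁻ y in Q, (S i).indicator (fun _ => ENNReal.ofReal (lam i ^ α)) y ∂μ :=
          lintegral_finset_sum _ (fun i _ => measurable_const.indicator (hSmeas i))
      _ ≤ ∑ i, ENNReal.ofReal (lam i ^ α) * μ (S i) := by
          refine Finset.sum_le_sum fun i _ => ?_
          refine (setLIntegral_le_lintegral _ _).trans ?_
          rw [lintegral_indicator (hSmeas i), setLIntegral_const]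
      _ = (∑ i, ENNReal.ofReal (lam i ^ (α + m))) * μ Q := by
          rw [Finset.sum_mul]
          refine Finset.sum_congr rfl fun i _ => ?_
          rw [hμS i, ← mul_assoc, ← ENNReal.ofReal_mul (Real.rpow_nonneg (hlam i).1.le α)]
          congr 2
          rw [Real.rpow_add (hlam i).1]
      _ = ENNReal.ofReal (∑ i, lam i ^ (α + m)) * μ Q := by
          rw [ENNReal.ofReal_sum_of_nonneg (fun i _ => Real.rpow_nonneg (hlam i).1.le _)]
  have hμQpos : μ Q ≠ 0 := by
    have h1 : 0 < μ (interior Q) := (isOpen_interior.measure_pos μ hQ.2.2)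
    exact (h1.trans_le (measure_mono interior_subset)).ne'
  have hμQfin : μ Q ≠ ⊤ := hQ.2.1.measure_lt_top.ne
  have := (ENNReal.mul_le_mul_iff_left hμQpos hμQfin).1 key
  exact (ENNReal.ofReal_le_ofReal_iff hsum_nonneg).1 this
end

section
/- For every integer d ≥ 1 and every integer α with 0 ≤ α ≤ d, the covering quantity of the unit cube satisfies g_α([0,1]^d) = 2^{d−α}. -/
open Set MeasureTheory Pointwise

/-- The unit cube `[0,1]^d` in `ℝ^d`. -/
def unitCube (d : ℕ) : Set (EuclideanSpace ℝ (Fin d)) :=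
  {x | ∀ i, x i ∈ Set.Icc (0 : ℝ) 1}

lemma mem_homothet {d : ℕ} {lam : ℝ} (hl : 0 < lam) (x y : EuclideanSpace ℝ (Fin d)) :
    y ∈ x +ᵥ lam • unitCube d ↔ ∀ j, y j ∈ Set.Icc (x j) (x j + lam) := by
  rw [Set.mem_vadd_set_iff_neg_vadd_mem, Set.mem_smul_set_iff_inv_smul_mem₀ hl.ne']
  have hev : ∀ j, (lam⁻¹ • (-x +ᵥ y)) j = lam⁻¹ * (y j - x j) := by
    intro j
    simp only [PiLp.smul_apply, vadd_eq_add, PiLp.add_apply, PiLp.neg_apply, smul_eq_mul]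
    ring
  have hinv := inv_pos.mpr hl
  have hcan := inv_mul_cancel₀ hl.ne'
  constructor
  · intro h j
    have := h j
    rw [hev j, Set.mem_Icc] at this
    rw [Set.mem_Icc]
    have key : lam * (lam⁻¹ * (y j - x j)) = y j - x j := by field_simp
    constructor
    · nlinarith [this.1, this.2]
    · nlinarith [this.1, this.2]
  · intro h j
    have := h j
    rw [Set.mem_Icc] at this
    rw [hev j, Set.mem_Icc]
    constructor
    · nlinarith [this.1]
    · nlinarith [this.2]

/-- Centers for the standard covering of the cube by `2^d` half-cubes. -/
noncomputable def vtx (d : ℕ) (b : Fin d → Bool) : EuclideanSpace ℝ (Fin d) :=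
  WithLp.toLp 2 (fun j => if b j then (1:ℝ)/2 else 0)

lemma cover_cube (d : ℕ) :
    unitCube d ⊆ ⋃ b : Fin d → Bool, (vtx d b +ᵥ ((1:ℝ)/2) • unitCube d) := by
  intro y hy
  refine Set.mem_iUnion.mpr ⟨fun j => decide ((1:ℝ)/2 < y j), ?_⟩
  rw [mem_homothet (by norm_num) _ y]
  intro j
  have := hy j
  rw [Set.mem_Icc] at this
  simp only [vtx, PiLp.toLp_apply, decide_eq_true_eq, Set.mem_Icc]
  split_ifs with h <;> constructor <;> linarith [this.1, this.2]

/-- Vertex coordinates for the face of the cube indexed by `η`. -/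
noncomputable def wcoord (d α : ℕ) (η : Fin (d - α) → Bool) (j : Fin d) : ℝ :=
  if h : α ≤ j.val then
    (if η ⟨j.val - α, by have := j.isLt; omega⟩ then 1 else 0) else 0

lemma lower_bound (d α : ℕ) (hα : α ≤ d) (k : ℕ) (lam : Fin k → ℝ)
    (x : Fin k → EuclideanSpace ℝ (Fin d))
    (hlam : ∀ i, lam i ∈ Set.Ioo (0:ℝ) 1)
    (hcov : unitCube d ⊆ ⋃ i, x i +ᵥ lam i • unitCube d) :
    (2:ℝ) ^ (d - α) ≤ ∑ i, lam i ^ α := by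
  classical
  set I : (Fin (d - α) → Bool) → Finset (Fin k) := fun η =>
    Finset.univ.filter (fun i => ∀ j : Fin d, α ≤ j.val →
      wcoord d α η j ∈ Set.Icc (x i j) (x i j + lam i)) with hI
  have hface : ∀ η, (1:ℝ) ≤ ∑ i ∈ I η, lam i ^ α := by
    intro η
    have hsub : (Set.univ.pi fun _ : Fin α => Set.Icc (0:ℝ) 1) ⊆
        ⋃ i ∈ I η, Set.univ.pi
          (fun m : Fin α => Set.Icc (x i (Fin.castLE hα m)) (x i (Fin.castLE hα m) + lam i)) := by
      intro p hp
      let y : EuclideanSpace ℝ (Fin d) := WithLp.toLp 2 (fun j =>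
        if h : j.val < α then p ⟨j.val, h⟩ else wcoord d α η j)
      have hylow : ∀ (j : Fin d) (h : j.val < α), y j = p ⟨j.val, h⟩ :=
        fun j h => by simp only [y, PiLp.toLp_apply]; exact dif_pos h
      have hyhigh : ∀ (j : Fin d), α ≤ j.val → y j = wcoord d α η j :=
        fun j h => by simp only [y, PiLp.toLp_apply]; exact dif_neg (Nat.not_lt.mpr h)
      have hyU : y ∈ unitCube d := by
        intro j
        by_cases h : j.val < α
        · rw [hylow j h]; exact hp _ (Set.mem_univ _)
        · rw [hyhigh j (Nat.not_lt.mp h)]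
          unfold wcoord
          split_ifs <;> norm_num
      obtain ⟨i, hi⟩ := Set.mem_iUnion.mp (hcov hyU)
      have hmem := (mem_homothet (hlam i).1 (x i) y).mp hi
      refine Set.mem_biUnion (show i ∈ I η from ?_) ?_
      · rw [hI]
        simp only [Finset.mem_filter, Finset.mem_univ, true_and]
        intro j hj
        have := hmem j
        rwa [hyhigh j hj] at this
      · intro m _
        have := hmem (Fin.castLE hα m)
        have hfm : (⟨(Fin.castLE hα m).val, m.isLt⟩ : Fin α) = m := Fin.ext rfl
        rwa [hylow (Fin.castLE hα m) m.isLt, hfm] at this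
    have hvol : (1 : ENNReal) ≤ ∑ i ∈ I η, ENNReal.ofReal (lam i ^ α) := by
      calc (1 : ENNReal) = volume (Set.univ.pi fun _ : Fin α => Set.Icc (0:ℝ) 1) := by
            rw [volume_pi_pi]; simp [Real.volume_Icc]
        _ ≤ volume (⋃ i ∈ I η, Set.univ.pi
              (fun m : Fin α => Set.Icc (x i (Fin.castLE hα m)) (x i (Fin.castLE hα m) + lam i))) :=
            measure_mono hsub
        _ ≤ ∑ i ∈ I η, volume (Set.univ.pi
              (fun m : Fin α => Set.Icc (x i (Fin.castLE hα m)) (x i (Fin.castLE hα m) + lam i))) :=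
            measure_biUnion_finset_le _ _
        _ = ∑ i ∈ I η, ENNReal.ofReal (lam i ^ α) := by
            refine Finset.sum_congr rfl fun i _ => ?_
            rw [volume_pi_pi]
            simp only [Real.volume_Icc, add_sub_cancel_left]
            rw [Finset.prod_const, ← ENNReal.ofReal_pow (hlam i).1.le]
            simp
    have h1 : ∑ i ∈ I η, ENNReal.ofReal (lam i ^ α) =
        ENNReal.ofReal (∑ i ∈ I η, lam i ^ α) :=
      (ENNReal.ofReal_sum_of_nonneg fun i _ => pow_nonneg (hlam i).1.le α).symm
    rw [h1, show (1:ENNReal) = ENNReal.ofReal 1 by simp] at hvol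
    exact (ENNReal.ofReal_le_ofReal_iff
      (Finset.sum_nonneg fun i _ => pow_nonneg (hlam i).1.le α)).mp hvol
  have hdisj : ∀ η η', η ≠ η' → Disjoint (I η) (I η') := by
    intro η η' hne
    rw [Finset.disjoint_left]
    intro i hiη hiη'
    obtain ⟨m, hm⟩ := Function.ne_iff.mp hne
    have hjlt : α + m.val < d := by have := m.isLt; omega
    have hjα : α ≤ (⟨α + m.val, hjlt⟩ : Fin d).val := Nat.le_add_right _ _
    rw [hI] at hiη hiη'
    simp only [Finset.mem_filter, Finset.mem_univ, true_and] at hiη hiη'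
    have h1 := hiη ⟨α + m.val, hjlt⟩ hjα
    have h2 := hiη' ⟨α + m.val, hjlt⟩ hjα
    have hmk : ∀ η₀ : Fin (d - α) → Bool,
        wcoord d α η₀ ⟨α + m.val, hjlt⟩ = if η₀ m then 1 else 0 := by
      intro η₀
      unfold wcoord
      rw [dif_pos hjα]
      simp only [Nat.add_sub_cancel_left, Fin.eta]
    rw [hmk, Set.mem_Icc] at h1 h2
    have hlt := (hlam i).2
    rcases Bool.eq_false_or_eq_true (η m) with h | h <;>
      rcases Bool.eq_false_or_eq_true (η' m) with h' | h' <;>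
      simp [h, h'] at h1 h2 hm <;> linarith [h1.1, h1.2, h2.1, h2.2]
  have hsum : ((Finset.univ : Finset (Fin (d - α) → Bool)).biUnion I).sum (fun i => lam i ^ α) =
      ∑ η : Fin (d - α) → Bool, ∑ i ∈ I η, lam i ^ α :=
    Finset.sum_biUnion (fun η _ η' _ hne => hdisj η η' hne)
  have hcard : (Finset.univ : Finset (Fin (d - α) → Bool)).card = 2 ^ (d - α) := by
    rw [Finset.card_univ, Fintype.card_fun]
    simp
  calc (2:ℝ) ^ (d - α) = ∑ _η : Fin (d - α) → Bool, (1:ℝ) := by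
        rw [Finset.sum_const, hcard]; simp
    _ ≤ ∑ η : Fin (d - α) → Bool, ∑ i ∈ I η, lam i ^ α :=
        Finset.sum_le_sum fun η _ => hface η
    _ = ((Finset.univ : Finset (Fin (d - α) → Bool)).biUnion I).sum (fun i => lam i ^ α) :=
        hsum.symm
    _ ≤ ∑ i, lam i ^ α :=
        Finset.sum_le_sum_of_subset_of_nonneg (Finset.subset_univ _)
          (fun i _ _ => pow_nonneg (hlam i).1.le α)

/-- For every `d ≥ 1` and every integer `0 ≤ α ≤ d`, `g_α([0,1]^d) = 2^{d-α}`. -/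
theorem gCov_unitCube (d : ℕ) (hd : 1 ≤ d) (α : ℕ) (hα : α ≤ d) :
    gCov (α : ℝ) (unitCube d) = 2 ^ (d - α) := by
  set S : Set ℝ := {s : ℝ | ∃ (k : ℕ) (lam : Fin k → ℝ) (x : Fin k → EuclideanSpace ℝ (Fin d)),
    (∀ i, lam i ∈ Set.Ioo (0 : ℝ) 1) ∧
    unitCube d ⊆ (⋃ i, x i +ᵥ lam i • unitCube d) ∧
    s = ∑ i, lam i ^ (α:ℝ)} with hS
  have hg : gCov (α : ℝ) (unitCube d) = sInf S := rfl
  have hlb : ∀ s ∈ S, (2:ℝ) ^ (d - α) ≤ s := by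
    rintro s ⟨k, lam, x, hlam, hcov, rfl⟩
    have : ∑ i, lam i ^ (α:ℝ) = ∑ i, lam i ^ α :=
      Finset.sum_congr rfl fun i _ => Real.rpow_natCast _ _
    rw [this]
    exact lower_bound d α hα k lam x hlam hcov
  have e : (Fin d → Bool) ≃ Fin (2 ^ d) :=
    Fintype.equivFinOfCardEq (by simp)
  have hmem : (2:ℝ) ^ (d - α) ∈ S := by
    refine ⟨2 ^ d, fun _ => 1/2, fun i => vtx d (e.symm i), fun i => by norm_num, ?_, ?_⟩
    · intro y hy
      obtain ⟨b, hb⟩ := Set.mem_iUnion.mp (cover_cube d hy)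
      exact Set.mem_iUnion.mpr ⟨e b, by simpa using hb⟩
    · rw [Finset.sum_const, Finset.card_univ, Fintype.card_fin, nsmul_eq_mul]
      have h2 : ((1:ℝ)/2) ^ (α:ℝ) = ((2:ℝ)^α)⁻¹ := by
        rw [Real.rpow_natCast, one_div, inv_pow]
      rw [h2, eq_mul_inv_iff_mul_eq₀ (by positivity)]
      push_cast
      rw [← pow_add]
      congr 1
      omega
  rw [hg]
  exact le_antisymm (csInf_le ⟨_, fun s hs => hlb s hs⟩ hmem) (le_csInf ⟨_, hmem⟩ hlb)
end

section
/- For every integer d ≥ 8 and every integer α with 2 ≤ α ≤ d − 2, the illumination quantity of the unit cube satisfies h_α([0,1]^d) > 2^{d−α}. -/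
open Set MeasureTheory Pointwise

/-- `hIll α B` is the minimal number of nonzero directions illuminating all boundary points
of `B` except for a set of Hausdorff dimension less than `α` (the empty exceptional set is
always allowed, its dimension being `-∞` by convention). -/
noncomputable def hIll {E : Type*} [NormedAddCommGroup E] [NormedSpace ℝ E]
    (α : ℝ) (B : Set E) : ℕ :=
  sInf {k : ℕ | ∃ v : Fin k → E, (∀ i, v i ≠ 0) ∧
    ({x ∈ frontier B | ∀ i, ¬ Illuminates B (v i) x} = ∅ ∨
      dimH {x ∈ frontier B | ∀ i, ¬ Illuminates B (v i) x} < ENNReal.ofReal α)}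

open scoped ENNReal


private def ind (b : Bool) : ZMod 2 := if b then 1 else 0

private lemma ind_not (b : Bool) : ind (!b) = ind b + 1 := by cases b <;> decide

private def par {ι : Type*} [Fintype ι] (q : ι → Bool) : ZMod 2 := ∑ j, ind (q j)

private lemma par_flip {ι : Type*} [Fintype ι] [DecidableEq ι] (q : ι → Bool) (j : ι) :
    par (Function.update q j (!q j)) = par q + 1 := by
  unfold par
  rw [← Finset.add_sum_erase Finset.univ (fun x => ind (Function.update q j (!q j) x)) (Finset.mem_univ j),
      ← Finset.add_sum_erase Finset.univ (fun x => ind (q x)) (Finset.mem_univ j)]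
  have h1 : ∑ x ∈ Finset.univ.erase j, ind (Function.update q j (!q j) x) =
      ∑ x ∈ Finset.univ.erase j, ind (q x) := by
    refine Finset.sum_congr rfl fun x hx => ?_
    rw [Function.update_of_ne (Finset.ne_of_mem_erase hx)]
  rw [h1, Function.update_self, ind_not]; ring

private lemma update_flip_flip {ι : Type*} [DecidableEq ι] (q : ι → Bool) (j : ι) :
    Function.update (Function.update q j (!q j)) j (!(Function.update q j (!q j) j)) = q := by
  funext x
  by_cases hx : x = j
  · subst hx; simp
  · simp [Function.update_of_ne hx]

/-- a function on boolean vectors invariant under single-coordinate flips is constant -/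
private lemma flip_invariant_const {ι : Type*} [Fintype ι] [DecidableEq ι]
    (H : (ι → Bool) → ZMod 2)
    (hH : ∀ q j, H (Function.update q j (!q j)) = H q) (q q' : ι → Bool) : H q = H q' := by
  suffices h : ∀ (n : ℕ) (q : ι → Bool), (Finset.univ.filter fun j => q j = true).card = n →
      H q = H (fun _ => false) by
    rw [h _ q rfl, h _ q' rfl]
  intro n
  induction n with
  | zero =>
    intro q hq
    have : q = fun _ => false := by
      funext j
      by_contra hj
      have : j ∈ Finset.univ.filter fun j => q j = true := by
        simp only [Finset.mem_filter, Finset.mem_univ, true_and]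
        revert hj; cases q j <;> simp
      rw [Finset.card_eq_zero.mp hq] at this
      exact absurd this (Finset.notMem_empty j)
    rw [this]
  | succ n ih =>
    intro q hq
    have hne : (Finset.univ.filter fun j => q j = true).Nonempty := by
      rw [← Finset.card_pos, hq]; omega
    obtain ⟨j, hj⟩ := hne
    have hqj : q j = true := (Finset.mem_filter.mp hj).2
    set q' := Function.update q j false with hq'def
    have h1 : q = Function.update q' j (!q' j) := by
      funext x
      by_cases hx : x = j
      · subst hx; simp [hq'def, hqj]
      · simp [hq'def, Function.update_of_ne hx]
    have h2 : (Finset.univ.filter fun x => q' x = true).card = n := by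
      have : (Finset.univ.filter fun x => q' x = true) = (Finset.univ.filter fun x => q x = true).erase j := by
        ext x
        simp only [Finset.mem_filter, Finset.mem_univ, true_and, Finset.mem_erase]
        by_cases hx : x = j
        · subst hx; simp [hq'def]
        · simp [hq'def, Function.update_of_ne hx, hx]
      rw [this, Finset.card_erase_of_mem hj, hq]; omega
    calc H q = H (Function.update q' j (!q' j)) := by rw [← h1]
    _ = H q' := hH q' j
    _ = H (fun _ => false) := ih q' h2

private lemma no_binary_MDS {d m k : ℕ} (hm : 2 ≤ m) (hdm : m + 2 ≤ d) (hk : k = 2 ^ m)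
    (σ : Fin k → Fin d → Bool)
    (hsurj : ∀ S : Finset (Fin d), S.card = m → ∀ q : Fin d → Bool,
      ∃ i, ∀ j ∈ S, σ i j = q j) : False := by
  -- injectivity on m-subsets
  have hinj : ∀ S : Finset (Fin d), S.card = m → ∀ i i' : Fin k,
      (∀ j ∈ S, σ i j = σ i' j) → i = i' := by
    intro S hS i i' hagree
    have hsurj' : Function.Surjective (fun (i : Fin k) (j : S) => σ i j) := by
      intro q
      obtain ⟨i, hi⟩ := hsurj S hS (fun j => if h : j ∈ S then q ⟨j, h⟩ else false)
      refine ⟨i, funext fun j => ?_⟩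
      show σ i j = q j
      rw [hi j j.2, dif_pos j.2]
    have hcard : Fintype.card (Fin k) = Fintype.card (S → Bool) := by
      simp [hk, hS]
    have hbij := (Fintype.bijective_iff_surjective_and_card _).mpr ⟨hsurj', hcard⟩
    exact hbij.1 (funext fun j => hagree j j.2)
  -- parity is constant on (m+1)-subsets
  have hpar : ∀ T : Finset (Fin d), T.card = m + 1 → ∀ i i' : Fin k,
      par (fun j : T => σ i j) = par (fun j : T => σ i' j) := by
    intro T hT i i'
    set r : Fin k → (T → Bool) := fun i (j : T) => σ i j with hr
    obtain ⟨S, hST, hScard⟩ : ∃ S ⊆ T, S.card = m :=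
      Finset.exists_subset_card_eq (by omega)
    have rinj : Function.Injective r := fun a a' h =>
      hinj S hScard a a' (fun j hj => congrFun h ⟨j, hST hj⟩)
    set A : Finset (T → Bool) := Finset.univ.image r with hA
    have hmemA : ∀ a : Fin k, r a ∈ A := fun a => Finset.mem_image_of_mem r (Finset.mem_univ a)
    have cardA : A.card = 2 ^ m := by
      rw [hA, Finset.card_image_of_injective _ rinj, Finset.card_univ, Fintype.card_fin, hk]
    have cardFull : Fintype.card (T → Bool) = 2 ^ (m + 1) := by
      simp [hT]
    have step1 : ∀ q ∈ A, ∀ j : T, Function.update q j (!q j) ∉ A := by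
      intro q hq j hq'
      obtain ⟨i', _, hi'⟩ := Finset.mem_image.mp hq
      obtain ⟨i'', _, hi''⟩ := Finset.mem_image.mp hq'
      have hagree : ∀ x ∈ T.erase (j : Fin d), σ i'' x = σ i' x := by
        intro x hx
        have hxT : x ∈ T := Finset.mem_of_mem_erase hx
        have hxj : (⟨x, hxT⟩ : T) ≠ j := by
          intro h
          exact (Finset.ne_of_mem_erase hx) (congrArg Subtype.val h)
        have := congrFun hi'' ⟨x, hxT⟩
        show r i'' ⟨x, hxT⟩ = r i' ⟨x, hxT⟩
        rw [this, Function.update_of_ne hxj, hi']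
      have hcerase : (T.erase (j : Fin d)).card = m := by
        rw [Finset.card_erase_of_mem j.2, hT]; omega
      have : i'' = i' := hinj _ hcerase _ _ hagree
      rw [this, hi'] at hi''
      have := congrFun hi'' j
      rw [Function.update_self] at this
      exact (Bool.not_ne_self (q j)) this.symm
    have step2 : ∀ q, q ∉ A → ∀ j : T, Function.update q j (!q j) ∈ A := by
      intro q hq j
      set B : Finset (T → Bool) := A.image (fun q => Function.update q j (!q j)) with hB
      have hinv : Function.Involutive (fun q : T → Bool => Function.update q j (!q j)) :=
        fun q => update_flip_flip q j
      have cardB : B.card = 2 ^ m := by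
        rw [hB, Finset.card_image_of_injective _ hinv.injective, cardA]
      have hdisj : Disjoint A B := by
        rw [Finset.disjoint_right]
        intro x hxB hxA
        obtain ⟨a, haA, ha⟩ := Finset.mem_image.mp hxB
        exact step1 a haA j (ha ▸ hxA)
      have huniv : A ∪ B = Finset.univ := by
        apply Finset.eq_univ_of_card
        rw [Finset.card_union_of_disjoint hdisj, cardA, cardB, cardFull]
        ring
      have hqB : q ∈ B := by
        have : q ∈ A ∪ B := huniv ▸ Finset.mem_univ q
        exact (Finset.mem_union.mp this).resolve_left hq
      obtain ⟨a, haA, ha⟩ := Finset.mem_image.mp hqB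
      have : Function.update q j (!q j) = a := by
        rw [← ha]; exact hinv a
      rwa [this]
    set H : (T → Bool) → ZMod 2 := fun q => par q + (if q ∈ A then 1 else 0) with hH
    have Hflip : ∀ q (j : T), H (Function.update q j (!q j)) = H q := by
      intro q j
      by_cases hq : q ∈ A
      · have h1 := step1 q hq j
        simp only [hH, par_flip, if_pos hq, if_neg h1]
        ring
      · have h2 := step2 q hq j
        simp only [hH, par_flip, if_pos h2, if_neg hq]
        ring_nf
        rw [show (2 : ZMod 2) = 0 from rfl, zero_add]
    have hconst := flip_invariant_const H Hflip (r i) (r i')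
    simp only [hH, if_pos (hmemA i), if_pos (hmemA i')] at hconst
    exact add_right_cancel hconst
  -- pairwise xor is constant
  have hpair : ∀ (j1 j2 : Fin d), j1 ≠ j2 → ∀ i i' : Fin k,
      ind (σ i j1) + ind (σ i j2) = ind (σ i' j1) + ind (σ i' j2) := by
    intro j1 j2 hne i i'
    obtain ⟨S, hSsub, hScard⟩ : ∃ S ⊆ Finset.univ \ {j1, j2}, S.card = m := by
      apply Finset.exists_subset_card_eq
      rw [Finset.card_univ_diff]
      have : ({j1, j2} : Finset (Fin d)).card = 2 := Finset.card_pair hne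
      rw [this, Fintype.card_fin]
      omega
    have hj1S : j1 ∉ S := fun h => by
      have := hSsub h; rw [Finset.mem_sdiff] at this
      exact this.2 (by simp)
    have hj2S : j2 ∉ S := fun h => by
      have := hSsub h; rw [Finset.mem_sdiff] at this
      exact this.2 (by simp)
    have hT1 : (insert j1 S).card = m + 1 := by rw [Finset.card_insert_of_notMem hj1S, hScard]
    have hT2 : (insert j2 S).card = m + 1 := by rw [Finset.card_insert_of_notMem hj2S, hScard]
    have key : ∀ (T : Finset (Fin d)) (a : Fin k),
        par (fun j : T => σ a j) = ∑ j ∈ T, ind (σ a j) := by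
      intro T a
      unfold par
      exact Finset.sum_coe_sort T (fun j => ind (σ a j))
    have h1 := hpar _ hT1 i i'
    have h2 := hpar _ hT2 i i'
    rw [key, key, Finset.sum_insert hj1S, Finset.sum_insert hj1S] at h1
    rw [key, key, Finset.sum_insert hj2S, Finset.sum_insert hj2S] at h2
    set s := ∑ j ∈ S, ind (σ i j) with hs
    set s' := ∑ j ∈ S, ind (σ i' j) with hs'
    have h2z : (2 : ZMod 2) = 0 := rfl
    linear_combination h1 + h2 + (s' - s) * h2z
  -- contradiction
  have h2d : 2 ≤ d := by omega
  set j1 : Fin d := ⟨0, by omega⟩ with hj1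
  set j2 : Fin d := ⟨1, by omega⟩ with hj2
  have hne : j1 ≠ j2 := by simp [hj1, hj2, Fin.ext_iff]
  obtain ⟨S, hsubS, _, hScard⟩ := Finset.exists_subsuperset_card_eq (n := m - 2 + ({j1, j2} : Finset (Fin d)).card)
    (Finset.subset_univ {j1, j2}) (Nat.le_add_left _ _)
    (by rw [Finset.card_pair hne, Finset.card_univ, Fintype.card_fin]; omega)
  have hScard' : S.card = m := by
    rw [hScard, Finset.card_pair hne]; omega
  have hj1 : j1 ∈ S := hsubS (by simp)
  have hj2 : j2 ∈ S := hsubS (by simp)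
  obtain ⟨i0, hi0⟩ := hsurj S hScard' (fun _ => false)
  obtain ⟨i1, hi1⟩ := hsurj S hScard' (fun j => decide (j = j1))
  have e0 := hpair j1 j2 hne i0 i1
  rw [hi0 j1 hj1, hi0 j2 hj2, hi1 j1 hj1, hi1 j2 hj2] at e0
  simp [ind, Ne.symm hne] at e0


private lemma cube_pi (d : ℕ) : unitCube d = (PiLp.homeomorph 2 (fun _ : Fin d => ℝ)) ⁻¹' Set.pi univ (fun _ => Icc (0:ℝ) 1) := by
  ext x; exact ⟨fun h i _ => h i, fun h i => h i trivial⟩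

private lemma interior_cube (d : ℕ) :
    interior (unitCube d) = {x | ∀ i, x i ∈ Ioo (0:ℝ) 1} := by
  rw [cube_pi, ← Homeomorph.preimage_interior, interior_pi_set finite_univ]
  ext x
  simp only [mem_preimage, mem_pi, mem_univ, forall_true_left, interior_Icc, mem_setOf_eq]
  tauto

private lemma isClosed_cube (d : ℕ) : IsClosed (unitCube d) := by
  rw [cube_pi]; exact (isClosed_set_pi fun i _ => isClosed_Icc).preimage (PiLp.homeomorph 2 _).continuous

private lemma frontier_cube (d : ℕ) :
    frontier (unitCube d) = unitCube d \ interior (unitCube d) := by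
  rw [frontier, (isClosed_cube d).closure_eq]

/-- relative interior of the face of the cube determined by fixing coordinates in `S`
    according to the boolean pattern `p` -/
def faceRel {d : ℕ} (S : Finset (Fin d)) (p : Fin d → Bool) :
    Set (EuclideanSpace ℝ (Fin d)) :=
  {x | (∀ j ∈ S, x j = if p j then 1 else 0) ∧ ∀ j ∉ S, x j ∈ Ioo (0:ℝ) 1}

private lemma face_subset_frontier {d : ℕ} {S : Finset (Fin d)} (hS : S.Nonempty)
    (p : Fin d → Bool) : faceRel S p ⊆ frontier (unitCube d) := by
  rw [frontier_cube]
  rintro x ⟨h1, h2⟩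
  constructor
  · intro i
    by_cases hi : i ∈ S
    · rw [h1 i hi]; split <;> norm_num
    · exact Ioo_subset_Icc_self (h2 i hi)
  · rw [interior_cube]
    intro hx
    obtain ⟨j, hj⟩ := hS
    have := hx j
    rw [h1 j hj] at this
    rcases this with ⟨ha, hb⟩
    split at ha <;> split at hb <;> simp_all <;> linarith

private lemma face_nonempty {d : ℕ} (S : Finset (Fin d)) (p : Fin d → Bool) :
    (faceRel S p).Nonempty := by
  refine ⟨(WithLp.toLp 2 (fun j => if j ∈ S then (if p j then 1 else 0) else 1/2 : Fin d → ℝ) :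
      EuclideanSpace ℝ (Fin d)), fun j hj => by simp [hj], fun j hj => by simp [hj]; norm_num⟩

/-- if `x` is in the relative interior of a face and is illuminated by `v`,
then `v` points strictly inward on all fixed coordinates -/
private lemma face_illum_sign {d : ℕ} {S : Finset (Fin d)} {p : Fin d → Bool}
    {x v : EuclideanSpace ℝ (Fin d)} (hx : x ∈ faceRel S p)
    (h : Illuminates (unitCube d) v x) :
    ∀ j ∈ S, (p j = true → v j < 0) ∧ (p j = false → 0 < v j) := by
  obtain ⟨t, ht, hmem⟩ := h
  rw [interior_cube] at hmem
  intro j hj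
  have hc : (x + t • v) j = x j + t * v j := rfl
  have h1 := hmem j
  rw [hc, hx.1 j hj] at h1
  constructor
  · intro hp
    rw [hp, if_pos rfl] at h1
    nlinarith [h1.2]
  · intro hp
    rw [hp] at h1
    simp only [Bool.false_eq_true, if_false] at h1
    nlinarith [h1.1]

private lemma abs_coord_le_norm {ι : Type*} [Fintype ι]
    (y : EuclideanSpace ℝ ι) (i : ι) : |y i| ≤ ‖y‖ := by
  rw [EuclideanSpace.norm_eq]
  have h1 : |y i| = Real.sqrt (|y i| ^ 2) := by
    rw [Real.sqrt_sq_eq_abs, abs_abs]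
  rw [h1]
  apply Real.sqrt_le_sqrt
  have : |y i| ^ 2 = ‖y i‖ ^ 2 := by rw [Real.norm_eq_abs]
  rw [this]
  exact Finset.single_le_sum (fun j _ => sq_nonneg ‖y j‖) (Finset.mem_univ i)

private lemma dimH_face_ge {d : ℕ} (S : Finset (Fin d)) (p : Fin d → Bool) :
    ((d - S.card : ℕ) : ℝ≥0∞) ≤ dimH (faceRel S p) := by
  classical
  set c : Fin d → ℝ := fun j => if j ∈ S then (if p j then 1 else 0) else 1/2 with hc
  set g : EuclideanSpace ℝ ↥(Sᶜ : Finset (Fin d)) → EuclideanSpace ℝ (Fin d) :=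
    fun y => WithLp.toLp 2 (fun j => c j + if h : j ∈ (Sᶜ : Finset (Fin d)) then y ⟨j, h⟩ else 0) with hg
  have hiso : Isometry g := by
    apply Isometry.of_dist_eq
    intro y z
    rw [EuclideanSpace.dist_eq, EuclideanSpace.dist_eq]
    congr 1
    have hvanish : ∀ j ∈ Finset.univ, j ∉ (Sᶜ : Finset (Fin d)) →
        dist (g y j) (g z j) ^ 2 = 0 := by
      intro j _ hj
      have hjS : j ∈ S := by simpa using hj
      simp [hg, dif_neg hj, hjS]
    rw [← Finset.sum_subset (Finset.subset_univ (Sᶜ : Finset (Fin d))) hvanish,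
      ← Finset.sum_attach (Sᶜ : Finset (Fin d)) (fun j => dist (g y j) (g z j) ^ 2)]
    rw [Finset.univ_eq_attach]
    refine Finset.sum_congr rfl fun j _ => ?_
    have : dist (g y ↑j) (g z ↑j) = dist (y j) (z j) := by
      simp only [hg, PiLp.toLp_apply, dif_pos j.2, Real.dist_eq]
      ring_nf
    rw [this]
  have himg : g '' (Metric.ball 0 (1/4)) ⊆ faceRel S p := by
    rintro _ ⟨y, hy, rfl⟩
    constructor
    · intro j hj
      have hj' : j ∉ (Sᶜ : Finset (Fin d)) := by simp [hj]
      simp [hg, dif_neg hj', hc, hj]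
    · intro j hj
      have hj' : j ∈ (Sᶜ : Finset (Fin d)) := by simp [hj]
      have hb : |y ⟨j, hj'⟩| ≤ ‖y‖ := abs_coord_le_norm y _
      rw [Metric.mem_ball, dist_zero_right] at hy
      have : |y ⟨j, hj'⟩| < 1/4 := lt_of_le_of_lt hb hy
      have habs := abs_lt.mp this
      simp only [hg, hc, PiLp.toLp_apply, dif_pos hj', if_neg hj, mem_Ioo]
      constructor <;> linarith [habs.1, habs.2]
  calc ((d - S.card : ℕ) : ℝ≥0∞)
      = dimH (Metric.ball (0 : EuclideanSpace ℝ ↥(Sᶜ : Finset (Fin d))) (1/4)) := by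
        rw [Real.dimH_of_mem_nhds (Metric.ball_mem_nhds 0 (by norm_num))]
        rw [finrank_euclideanSpace]
        congr 1
        rw [Fintype.card_coe, Finset.card_compl, Fintype.card_fin]
    _ = dimH (g '' (Metric.ball 0 (1/4))) := (hiso.dimH_image _).symm
    _ ≤ dimH (faceRel S p) := dimH_mono himg

private lemma illum_all (d : ℕ) (hd : 0 < d) :
    ∃ v : Fin (2^d) → EuclideanSpace ℝ (Fin d), (∀ i, v i ≠ 0) ∧
    {x ∈ frontier (unitCube d) | ∀ i, ¬ Illuminates (unitCube d) (v i) x} = ∅ := by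
  classical
  have hce : Fintype.card (Fin d → Bool) = 2 ^ d := by simp
  set e : (Fin d → Bool) ≃ Fin (2^d) := Fintype.equivFinOfCardEq hce with he
  set v : Fin (2^d) → EuclideanSpace ℝ (Fin d) :=
    fun i => (WithLp.toLp 2 (fun j => if e.symm i j then -1 else 1 : Fin d → ℝ) : EuclideanSpace ℝ (Fin d)) with hv
  refine ⟨v, fun i h => ?_, ?_⟩
  · have h0 : v i ⟨0, hd⟩ = 0 := by rw [h]; rfl
    rw [hv] at h0
    simp only [PiLp.toLp_apply] at h0
    split at h0 <;> norm_num at h0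
  · ext x
    simp only [mem_setOf_eq, mem_empty_iff_false, iff_false, not_and, not_forall, not_not]
    intro hx
    have hxC : x ∈ unitCube d := ((frontier_cube d) ▸ hx).1
    set b : Fin d → Bool := fun j => decide (x j = 1) with hb
    refine ⟨e b, ?_⟩
    set f : Fin d → ℝ := fun j => if x j = 1 then 1/2 else (1 - x j)/2 with hf
    have hne : (Finset.univ : Finset (Fin d)).Nonempty := ⟨⟨0, hd⟩, Finset.mem_univ _⟩
    set t : ℝ := Finset.univ.inf' hne f with htdef
    have hfpos : ∀ j, 0 < f j := by
      intro j
      rw [hf]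
      simp only []
      split
      · norm_num
      · have h1 : x j < 1 := lt_of_le_of_ne (hxC j).2 (by assumption)
        linarith
    have ht : 0 < t := by
      rw [htdef, Finset.lt_inf'_iff]
      exact fun j _ => hfpos j
    have htle : ∀ j, t ≤ f j := fun j => Finset.inf'_le f (Finset.mem_univ j)
    refine ⟨t, ht, ?_⟩
    rw [interior_cube]
    intro j
    have hcoord : (x + t • v (e b)) j = x j + t * v (e b) j := rfl
    have hvj : v (e b) j = if x j = 1 then -1 else 1 := by
      rw [hv]
      simp only [PiLp.toLp_apply, Equiv.symm_apply_apply, hb, decide_eq_true_eq]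
    rw [mem_Ioo, hcoord, hvj]
    by_cases hx1 : x j = 1
    · rw [if_pos hx1, hx1]
      have := htle j
      rw [hf] at this
      simp only [if_pos hx1] at this
      constructor <;> nlinarith
    · rw [if_neg hx1]
      have h1 : x j < 1 := lt_of_le_of_ne (hxC j).2 hx1
      have h0 : 0 ≤ x j := (hxC j).1
      have := htle j
      rw [hf] at this
      simp only [if_neg hx1] at this
      constructor <;> nlinarith

private lemma lower_bound_s10 {d α : ℕ} (hd : 8 ≤ d) (hα2 : 2 ≤ α) (hαd : α ≤ d - 2)
    {k : ℕ} (v : Fin k → EuclideanSpace ℝ (Fin d)) (hv0 : ∀ i, v i ≠ 0)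
    (hN : {x ∈ frontier (unitCube d) | ∀ i, ¬ Illuminates (unitCube d) (v i) x} = ∅ ∨
      dimH {x ∈ frontier (unitCube d) | ∀ i, ¬ Illuminates (unitCube d) (v i) x}
        < ENNReal.ofReal (α : ℝ)) :
    2 ^ (d - α) < k := by
  classical
  set m := d - α with hm
  by_contra hk'
  push_neg at hk'
  -- every face of dimension α must be "sign-illuminated" by some direction
  have hface : ∀ S : Finset (Fin d), S.card = m → ∀ p : Fin d → Bool,
      ∃ i, ∀ j ∈ S, (p j = true → v i j < 0) ∧ (p j = false → 0 < v i j) := by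
    intro S hS p
    by_contra hno
    rw [not_exists] at hno
    have hno' : ∀ i, ¬ ∀ j ∈ S, (p j = true → v i j < 0) ∧ (p j = false → 0 < v i j) := hno
    have hSne : S.Nonempty := Finset.card_pos.mp (by omega)
    have hsub : faceRel S p ⊆
        {x ∈ frontier (unitCube d) | ∀ i, ¬ Illuminates (unitCube d) (v i) x} := by
      intro x hx
      exact ⟨face_subset_frontier hSne p hx,
        fun i hi => hno' i (face_illum_sign hx hi)⟩
    rcases hN with h0 | hdim
    · obtain ⟨x, hx⟩ := face_nonempty S p
      rw [← mem_empty_iff_false x, ← h0]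
      exact hsub hx
    · have h1 : ((α : ℕ) : ℝ≥0∞) ≤
          dimH {x ∈ frontier (unitCube d) | ∀ i, ¬ Illuminates (unitCube d) (v i) x} := by
        have h2 := (dimH_face_ge S p).trans (dimH_mono hsub)
        rw [hS] at h2
        have h3 : d - m = α := by omega
        rwa [h3] at h2
      rw [ENNReal.ofReal_natCast] at hdim
      exact absurd hdim (not_lt.mpr h1)
  -- sign patterns of the directions
  set σ : Fin k → Fin d → Bool := fun i j => decide (v i j < 0) with hσ
  -- surjectivity of sign patterns onto every m-subset
  have hsurj : ∀ S : Finset (Fin d), S.card = m → ∀ q : Fin d → Bool,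
      ∃ i, ∀ j ∈ S, σ i j = q j := by
    intro S hS q
    obtain ⟨i, hi⟩ := hface S hS q
    refine ⟨i, fun j hj => ?_⟩
    rcases (hi j hj) with ⟨h1, h2⟩
    cases hq : q j with
    | true => simp [hσ, h1 hq]
    | false => simp [hσ, not_lt.mpr (le_of_lt (h2 hq))]
  -- cardinality: k = 2^m
  have hmd : m ≤ d := by omega
  obtain ⟨S0, -, hS0⟩ := Finset.exists_subset_card_eq (s := (Finset.univ : Finset (Fin d)))
    (n := m) (by simp [hmd])
  have hkge : 2 ^ m ≤ k := by
    set Ψ : (↥S0 → Bool) → Fin k :=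
      fun q => (hface S0 hS0 (fun j => if h : j ∈ S0 then q ⟨j, h⟩ else false)).choose with hΨ
    have hΨspec : ∀ q : ↥S0 → Bool, ∀ j : ↥S0,
        (q j = true → v (Ψ q) j < 0) ∧ (q j = false → 0 < v (Ψ q) j) := by
      intro q j
      have := (hface S0 hS0 (fun j => if h : j ∈ S0 then q ⟨j, h⟩ else false)).choose_spec
        j j.2
      rwa [dif_pos j.2] at this
    have hΨinj : Function.Injective Ψ := by
      intro q q' hqq
      funext j
      by_contra hne
      rcases Bool.eq_false_or_eq_true (q j) with h1 | h1
      · -- q j = true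
        have h2 : q' j = false := by
          cases hq' : q' j
          · rfl
          · exact absurd (h1.trans hq'.symm) hne
        have ha := (hΨspec q j).1 h1
        have hb := (hΨspec q' j).2 h2
        rw [← hqq] at hb
        linarith
      · -- q j = false
        have h2 : q' j = true := by
          cases hq' : q' j
          · exact absurd (h1.trans hq'.symm) hne
          · rfl
        have ha := (hΨspec q j).2 h1
        have hb := (hΨspec q' j).1 h2
        rw [← hqq] at hb
        linarith
    calc 2 ^ m = Fintype.card (↥S0 → Bool) := by simp [hS0]
    _ ≤ Fintype.card (Fin k) := Fintype.card_le_of_injective Ψ hΨinj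
    _ = k := Fintype.card_fin k
  exact no_binary_MDS (by omega) (by omega) (le_antisymm hk' hkge) σ hsurj

/-- For every `d ≥ 8` and every integer `2 ≤ α ≤ d - 2`, `h_α([0,1]^d) > 2^{d-α}`. -/
theorem hIll_unitCube_gt (d : ℕ) (hd : 8 ≤ d) (α : ℕ) (hα2 : 2 ≤ α) (hαd : α ≤ d - 2) :
    2 ^ (d - α) < hIll (α : ℝ) (unitCube d) := by
  unfold hIll
  have hmem : 2 ^ d ∈ {k : ℕ | ∃ v : Fin k → EuclideanSpace ℝ (Fin d), (∀ i, v i ≠ 0) ∧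
      ({x ∈ frontier (unitCube d) | ∀ i, ¬ Illuminates (unitCube d) (v i) x} = ∅ ∨
        dimH {x ∈ frontier (unitCube d) | ∀ i, ¬ Illuminates (unitCube d) (v i) x}
          < ENNReal.ofReal (α : ℝ))} := by
    obtain ⟨v, hv0, hemp⟩ := illum_all d (by omega)
    exact ⟨v, hv0, Or.inl hemp⟩
  obtain ⟨v, hv0, hN⟩ := Nat.sInf_mem ⟨2 ^ d, hmem⟩
  exact lower_bound_s10 hd hα2 hαd v hv0 hN
end

section
/- Let d and α be integers with 0 ≤ α ≤ d, and let S ⊆ {0,1}^d be a set of vertices of the cube with |S| ≤ 2^{d−α} such that S meets every α-dimensional face of the cube; that is, for every subset I ⊆ {1,…,d} with |I| = d − α and every assignment ε : I → {0,1} there exists s ∈ S with s_i = ε(i) for all i ∈ I. Then |S| = 2^{d−α} and any two distinct elements of S have Hamming distance at least α + 1. -/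
/-- If `S ⊆ {0,1}^d` has at most `2^{d-α}` elements and meets every `α`-dimensional face of
the cube (for every set `I` of `d - α` coordinates and every assignment `ε` on `I` there is
`s ∈ S` agreeing with `ε` on `I`), then `|S| = 2^{d-α}` and any two distinct elements of `S`
have Hamming distance at least `α + 1`. -/
theorem cube_code (d α : ℕ) (hα : α ≤ d) (S : Finset (Fin d → Bool))
    (hcard : S.card ≤ 2 ^ (d - α))
    (hmeet : ∀ I : Finset (Fin d), I.card = d - α → ∀ ε : Fin d → Bool,
      ∃ s ∈ S, ∀ i ∈ I, s i = ε i) :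
    S.card = 2 ^ (d - α) ∧
      ∀ s ∈ S, ∀ t ∈ S, s ≠ t → α + 1 ≤ hammingDist s t := by
  have key : ∀ I : Finset (Fin d), I.card = d - α →
      S.card = 2 ^ (d - α) ∧
      ∀ s ∈ S, ∀ t ∈ S, (∀ i ∈ I, s i = t i) → s = t := by
    intro I hI
    set F : (Fin d → Bool) → ({x // x ∈ I} → Bool) := fun s i => s i.1 with hF
    have hsurj : ∀ g : {x // x ∈ I} → Bool, ∃ s ∈ S, F s = g := by
      intro g
      obtain ⟨s, hs, hag⟩ := hmeet I hI (fun i => if h : i ∈ I then g ⟨i, h⟩ else false)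
      refine ⟨s, hs, funext fun i => ?_⟩
      simp [hF, hag i.1 i.2, i.2]
    have hsub : (Finset.univ : Finset ({x // x ∈ I} → Bool)) ⊆ S.image F := by
      intro g _
      obtain ⟨s, hs, hFs⟩ := hsurj g
      exact Finset.mem_image.2 ⟨s, hs, hFs⟩
    have hcard2 : 2 ^ (d - α) ≤ (S.image F).card := by
      have h1 := Finset.card_le_card hsub
      have h2 : (Finset.univ : Finset ({x // x ∈ I} → Bool)).card = 2 ^ (d - α) := by
        simp [Finset.card_univ, hI]
      omega
    have hle : (S.image F).card ≤ S.card := Finset.card_image_le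
    have hSc : S.card = 2 ^ (d - α) := by omega
    have heq : (S.image F).card = S.card := by omega
    have hinj := Finset.injOn_of_card_image_eq heq
    refine ⟨hSc, fun s hs t ht hag => ?_⟩
    apply hinj hs ht
    funext i
    exact hag i.1 i.2
  obtain ⟨I₀, hI₀⟩ := Finset.exists_subset_card_eq (s := (Finset.univ : Finset (Fin d))) (n := d - α)
    (by simpa using Nat.sub_le d α)
  refine ⟨(key I₀ hI₀.2).1, fun s hs t ht hne => ?_⟩
  by_contra h
  push_neg at h
  have hdist : hammingDist s t ≤ α := by omega
  set D : Finset (Fin d) := Finset.univ.filter (fun i => s i ≠ t i) with hD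
  have hDcard : D.card = hammingDist s t := rfl
  have hcompl : d - α ≤ Dᶜ.card := by
    have := Finset.card_compl D
    simp only [Fintype.card_fin] at this
    omega
  obtain ⟨I, hIsub, hIcard⟩ := Finset.exists_subset_card_eq (s := Dᶜ) (n := d - α) hcompl
  apply hne
  apply (key I hIcard).2 s hs t ht
  intro i hi
  have : i ∈ Dᶜ := hIsub hi
  simp [hD, Finset.mem_compl] at this
  exact this
end

section
/- For all integers d and α with d ≥ 8 and 2 ≤ α ≤ d − 2, one has ∑_{i=0}^{⌊α/2⌋} C(d, i) > 2^α, where C(d, i) is the binomial coefficient. -/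
open Finset

lemma sum_pascal (k n : ℕ) :
    ∑ i ∈ range (n+1), Nat.choose (k+1) i
      = ∑ i ∈ range (n+1), Nat.choose k i + ∑ i ∈ range n, Nat.choose k i := by
  induction n with
  | zero => simp
  | succ n ih =>
      rw [sum_range_succ, ih, sum_range_succ (fun i => Nat.choose k i) (n+1),
        sum_range_succ (fun i => Nat.choose k i) n, Nat.choose_succ_succ k n]
      ring

lemma keyA (m : ℕ) (hm : 3 ≤ m) : Nat.choose (2*m+3) (m+1) < 2^(2*m+1) := by
  induction m, hm using Nat.le_induction with
  | base => decide
  | succ m hm ih =>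
    set a := Nat.choose (2*m+3) (m+1) with ha
    set b := Nat.choose (2*m+4) (m+1) with hb
    have h1 : (2*m+5) * b = Nat.choose (2*m+5) (m+2) * (m+2) := by
      have := Nat.add_one_mul_choose_eq (2*m+4) (m+1)
      simpa [hb, Nat.succ_eq_add_one, show 2*m+4+1 = 2*m+5 by ring] using this
    have h2 : a * (2*m+4) = b * (m+3) := by
      have := Nat.choose_mul_succ_eq (2*m+3) (m+1)
      simpa [ha, hb, show 2*m+3+1 = 2*m+4 by ring, show 2*m+3+1-(m+1) = m+3 by omega] using this
    set c := Nat.choose (2*m+5) (m+2) with hc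
    have hgoal : Nat.choose (2*(m+1)+3) ((m+1)+1) = c ∧ 2*(m+1)+1 = 2*m+3 := by
      constructor
      · rw [hc]; congr 1 <;> ring
      · ring
    have hcid : c * ((m+2)*(m+3)) = a * ((2*m+4)*(2*m+5)) := by
      calc c * ((m+2)*(m+3)) = (c*(m+2))*(m+3) := by ring
        _ = ((2*m+5)*b)*(m+3) := by rw [h1]
        _ = (2*m+5) * (b*(m+3)) := by ring
        _ = (2*m+5) * (a*(2*m+4)) := by rw [h2]
        _ = a * ((2*m+4)*(2*m+5)) := by ring
    have hlt : c * ((m+2)*(m+3)) < 2^(2*m+3) * ((m+2)*(m+3)) := by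
      rw [hcid]
      calc a * ((2*m+4)*(2*m+5)) < 2^(2*m+1) * ((2*m+4)*(2*m+5)) := by
            exact Nat.mul_lt_mul_of_pos_right ih (by positivity)
        _ ≤ 2^(2*m+1) * ((2*m+4)*(2*m+6)) := by gcongr <;> omega
        _ = 2^(2*m+3) * ((m+2)*(m+3)) := by
            rw [show 2*m+3 = (2*m+1)+1+1 by ring, pow_succ, pow_succ]; ring
    have : c < 2^(2*m+3) := lt_of_mul_lt_mul_right hlt (Nat.zero_le _)
    rw [hgoal.1, show 2*(m+1)+1 = 2*m+3 by ring]
    exact this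

lemma lemB (d m : ℕ) (hm : 1 ≤ m) (hd8 : 8 ≤ d) (hdm : 2*m+3 ≤ d) :
    2^(2*m+1) < ∑ i ∈ range (m+1), Nat.choose d i := by
  rcases Nat.lt_or_ge m 3 with h3 | h3
  · interval_cases m
    · simp [Finset.sum_range_succ]
      omega
    · have hc2 : (28:ℕ) ≤ Nat.choose d 2 := by
        calc (28:ℕ) = Nat.choose 8 2 := by decide
          _ ≤ _ := Nat.choose_le_choose 2 hd8
      simp [Finset.sum_range_succ]
      omega
  · have hmono : ∑ i ∈ range (m+1), Nat.choose (2*m+3) i ≤ ∑ i ∈ range (m+1), Nat.choose d i :=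
      Finset.sum_le_sum (fun i _ => Nat.choose_le_choose i hdm)
    have hhalf := Nat.sum_range_choose_halfway (m+1)
    rw [Finset.sum_range_succ, show 2*(m+1)+1 = 2*m+3 by ring] at hhalf
    have hA := keyA m h3
    have h4 : (4:ℕ)^(m+1) = 2^(2*m+1) + 2^(2*m+1) := by
      rw [show (4:ℕ) = 2^2 from rfl, ← pow_mul, show 2*(m+1) = (2*m+1)+1 by ring, pow_succ]
      ring
    omega

lemma lemC (m : ℕ) (hm : 1 ≤ m) :
    2^(2*m) < ∑ i ∈ range (m+1), Nat.choose (2*m+2) i := by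
  have hp := sum_pascal (2*m+1) m
  rw [show 2*m+1+1 = 2*m+2 by ring] at hp
  have hhalf := Nat.sum_range_choose_halfway m
  have hpos : 1 ≤ ∑ i ∈ range m, Nat.choose (2*m+1) i := by
    calc 1 = ∑ i ∈ range 1, Nat.choose (2*m+1) i := by simp
    _ ≤ _ := Finset.sum_le_sum_of_subset (Finset.range_subset_range.2 hm)
  have h4 : (4:ℕ)^m = 2^(2*m) := by
    rw [show (4:ℕ) = 2^2 from rfl, ← pow_mul]
  omega

/-- For integers `d ≥ 8` and `2 ≤ α ≤ d - 2`, `∑_{i=0}^{⌊α/2⌋} C(d, i) > 2^α`. -/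
theorem binom_sum_gt (d α : ℕ) (hd : 8 ≤ d) (hα2 : 2 ≤ α) (hαd : α ≤ d - 2) :
    2 ^ α < ∑ i ∈ Finset.range (α / 2 + 1), Nat.choose d i := by
  have hd2 : α + 2 ≤ d := by omega
  rcases Nat.even_or_odd α with he | ho
  · obtain ⟨m, rfl⟩ := he
    have hm1 : 1 ≤ m := by omega
    rw [show (m+m)/2 = m by omega, show (2:ℕ)^(m+m) = 2^(2*m) by rw [show m+m = 2*m by ring]]
    have hmono : ∑ i ∈ range (m+1), Nat.choose (2*m+2) i ≤ ∑ i ∈ range (m+1), Nat.choose d i :=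
      Finset.sum_le_sum (fun i _ => Nat.choose_le_choose i (by omega))
    exact lt_of_lt_of_le (lemC m hm1) hmono
  · obtain ⟨m, rfl⟩ := ho
    have hm1 : 1 ≤ m := by omega
    rw [show (2*m+1)/2 = m by omega]
    exact lemB d m hm1 hd (by omega)
end
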